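/- Let $G_1, \ldots, G_l$ ($l \ge 1$) be edge-disjoint subgraphs of a graph $G$ on $n$ vertices with $E(G) = \bigcup_{i=1}^l E(G_i)$. For $\frac{1}{2} \le \alpha < 1$ and $1 \le k \le n$, the sum of the $k$ largest $A_\alpha$-eigenvalues of $G$ is at most the sum over $i$ of the sums of the $k$ largest $A_\alpha$-eigenvalues of $G_i$ (where if $G_i$ has fewer than $k$ vertices, all its eigenvalues are summed). -/

import Mathlib

open Finset

/-- `μ` is a decreasing enumeration of the eigenvalues of the real symmetric
matrix `M`. -/
def IsSortedEigs {p : ℕ} (M : Matrix (Fin p) (Fin p) ℝ) (hM : M.IsHermitian)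
    (μ : Fin p → ℝ) : Prop :=
  Antitone μ ∧ ∃ σ : Equiv.Perm (Fin p), μ = hM.eigenvalues ∘ σ

open Matrix

lemma count_lt {n k : ℕ} (hkn : k ≤ n) (c : ℝ) :
    ∑ j : Fin n, (if (j : ℕ) < k then c else 0) = k * c := by
  rw [Fin.sum_univ_eq_sum_range (fun j => if j < k then c else 0) n, Finset.sum_ite,
    Finset.sum_const_zero, add_zero, Finset.sum_const, nsmul_eq_mul]
  congr 2
  have h : Finset.filter (fun a => a < k) (Finset.range n) = Finset.range k := by
    ext a; simp; omega
  rw [h, Finset.card_range]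

lemma key_ineq {n k : ℕ} (hk1 : 1 ≤ k) (hkn : k ≤ n) (μ : Fin n → ℝ) (hμ : Antitone μ)
    (s : Fin n → ℝ) (h0 : ∀ a, 0 ≤ s a) (h1 : ∀ a, s a ≤ 1) (hsum : ∑ a, s a = k) :
    ∑ a, μ a * s a ≤ ∑ a : Fin n, (if (a : ℕ) < k then μ a else 0) := by
  have hk0 : k - 1 < n := by omega
  set c := μ ⟨k - 1, hk0⟩ with hc
  have step : ∀ a : Fin n, μ a * s a ≤
      c * s a - (if (a : ℕ) < k then c else 0) + (if (a : ℕ) < k then μ a else 0) := by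
    intro a
    by_cases h : (a : ℕ) < k
    · simp only [h, if_pos]
      have hca : c ≤ μ a := hμ (show a ≤ ⟨k - 1, hk0⟩ by
        rw [Fin.le_def]; simp; omega)
      nlinarith [h1 a]
    · simp only [h, if_neg, not_false_iff]
      have hca : μ a ≤ c := hμ (show (⟨k - 1, hk0⟩ : Fin n) ≤ a by
        rw [Fin.le_def]; simp; omega)
      nlinarith [h0 a]
  calc ∑ a, μ a * s a ≤ ∑ a : Fin n, (c * s a - (if (a : ℕ) < k then c else 0)
        + (if (a : ℕ) < k then μ a else 0)) := Finset.sum_le_sum fun a _ => step a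
    _ = c * (∑ a, s a) - ∑ a : Fin n, (if (a : ℕ) < k then c else 0)
        + ∑ a : Fin n, (if (a : ℕ) < k then μ a else 0) := by
      rw [Finset.sum_add_distrib, Finset.sum_sub_distrib, Finset.mul_sum]
    _ = ∑ a : Fin n, (if (a : ℕ) < k then μ a else 0) := by
      rw [hsum, count_lt hkn]; ring

lemma quad_expand {n : ℕ} (N : Matrix (Fin n) (Fin n) ℝ) (hN : N.IsHermitian) (w : Fin n → ℝ) :
    w ⬝ᵥ (N *ᵥ w) = ∑ a, hN.eigenvalues a *
      ((star (hN.eigenvectorUnitary : Matrix (Fin n) (Fin n) ℝ) *ᵥ w) a) ^ 2 := by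
  set U := (hN.eigenvectorUnitary : Matrix (Fin n) (Fin n) ℝ) with hU
  set c := star U *ᵥ w with hcdef
  have hsp : N = U * diagonal (RCLike.ofReal ∘ hN.eigenvalues) * star U := hN.spectral_theorem
  have hdiag : (RCLike.ofReal ∘ hN.eigenvalues : Fin n → ℝ) = hN.eigenvalues := by
    funext a; simp
  conv_lhs => rw [hsp, hdiag]
  rw [← mulVec_mulVec, ← mulVec_mulVec, dotProduct_mulVec]
  have hvm : w ᵥ* U = c := by
    rw [hcdef]
    ext a
    simp [vecMul, mulVec, dotProduct, Matrix.star_apply, mul_comm]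
  rw [hvm]
  simp [dotProduct, mulVec_diagonal, ← hcdef]
  congr 1; funext a; ring

lemma kyFan_bound {n : ℕ} (N : Matrix (Fin n) (Fin n) ℝ) (hN : N.IsHermitian)
    (μ : Fin n → ℝ) (hμ : IsSortedEigs N hN μ)
    (w : Fin n → (Fin n → ℝ))
    (horth : ∀ j j', (w j) ⬝ᵥ (w j') = if j = j' then 1 else 0)
    (k : ℕ) (hk1 : 1 ≤ k) (hkn : k ≤ n) :
    ∑ j : Fin n, (if (j : ℕ) < k then w j ⬝ᵥ (N *ᵥ w j) else 0)
      ≤ ∑ j : Fin n, (if (j : ℕ) < k then μ j else 0) := by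
  obtain ⟨hanti, τ, hτ⟩ := hμ
  set U := (hN.eigenvectorUnitary : Matrix (Fin n) (Fin n) ℝ) with hUdef
  have hU1 : U * star U = 1 := Matrix.mem_unitaryGroup_iff.mp hN.eigenvectorUnitary.2
  have hU2 : star U * U = 1 := Matrix.mem_unitaryGroup_iff'.mp hN.eigenvectorUnitary.2
  set W : Matrix (Fin n) (Fin n) ℝ := Matrix.of (fun b j => w j b) with hWdef
  set C : Matrix (Fin n) (Fin n) ℝ := star U * W with hCdef
  have hW1 : star W * W = 1 := by
    ext j j'
    simp only [Matrix.mul_apply, Matrix.star_apply, hWdef, Matrix.of_apply, star_trivial,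
      Matrix.one_apply]
    rw [← horth j j']
    simp [dotProduct]
  have hW2 : W * star W = 1 := mul_eq_one_comm.mp hW1
  have hC1 : star C * C = 1 := by
    rw [hCdef, StarMul.star_mul, star_star, Matrix.mul_assoc, ← Matrix.mul_assoc U,
      hU1, Matrix.one_mul, hW1]
  have hC2 : C * star C = 1 := mul_eq_one_comm.mp hC1
  -- columns of C
  have hcol : ∀ j, ∑ a, (C a j) ^ 2 = 1 := by
    intro j
    have := congrFun (congrFun hC1 j) j
    simp only [Matrix.mul_apply, Matrix.star_apply, star_trivial, Matrix.one_apply_eq] at this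
    rw [← this]
    congr 1; funext a; ring
  have hrow : ∀ a, ∑ j, (C a j) ^ 2 = 1 := by
    intro a
    have := congrFun (congrFun hC2 a) a
    simp only [Matrix.mul_apply, Matrix.star_apply, star_trivial, Matrix.one_apply_eq] at this
    rw [← this]
    congr 1; funext j; ring
  have hCmv : ∀ j a, (star U *ᵥ w j) a = C a j := by
    intro j a
    simp [hCdef, Matrix.mul_apply, Matrix.mulVec, dotProduct, hWdef]
  set t : Fin n → ℝ := fun a => ∑ j : Fin n, (if (j : ℕ) < k then (C a j) ^ 2 else 0) with htdef
  have ht0 : ∀ a, 0 ≤ t a := fun a => Finset.sum_nonneg fun j _ => by positivity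
  have ht1 : ∀ a, t a ≤ 1 := by
    intro a
    rw [← hrow a]
    refine Finset.sum_le_sum fun j _ => ?_
    split
    · exact le_rfl
    · positivity
  have htsum : ∑ a, t a = k := by
    rw [htdef]
    simp only
    rw [Finset.sum_comm]
    calc ∑ j : Fin n, ∑ a : Fin n, (if (j : ℕ) < k then (C a j) ^ 2 else 0)
        = ∑ j : Fin n, (if (j : ℕ) < k then (1:ℝ) else 0) := by
          apply Finset.sum_congr rfl
          intro j _
          by_cases h : (j : ℕ) < k
          · simp only [h, if_pos, hcol j]
          · simp [h]
        _ = k := by rw [count_lt hkn]; ring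
  have hq : ∀ j, w j ⬝ᵥ (N *ᵥ w j) = ∑ a, hN.eigenvalues a * (C a j) ^ 2 := by
    intro j
    rw [quad_expand N hN (w j)]
    exact Finset.sum_congr rfl fun a _ => by rw [hCmv]
  have hswap : ∑ j : Fin n, (if (j : ℕ) < k then w j ⬝ᵥ (N *ᵥ w j) else 0)
      = ∑ a, hN.eigenvalues a * t a := by
    calc ∑ j : Fin n, (if (j : ℕ) < k then w j ⬝ᵥ (N *ᵥ w j) else 0)
        = ∑ j : Fin n, ∑ a : Fin n,
            (if (j : ℕ) < k then hN.eigenvalues a * (C a j) ^ 2 else 0) := by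
          apply Finset.sum_congr rfl
          intro j _
          by_cases h : (j : ℕ) < k
          · simp only [h, if_pos, hq j]
          · simp [h]
      _ = ∑ a : Fin n, ∑ j : Fin n,
            (if (j : ℕ) < k then hN.eigenvalues a * (C a j) ^ 2 else 0) := Finset.sum_comm
      _ = ∑ a, hN.eigenvalues a * t a := by
          apply Finset.sum_congr rfl
          intro a _
          rw [htdef]
          simp only [Finset.mul_sum, mul_ite, mul_zero]
  rw [hswap]
  set s : Fin n → ℝ := fun a => t (τ a) with hsdef
  have hre : ∑ a, hN.eigenvalues a * t a = ∑ a, μ a * s a := by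
    rw [← Equiv.sum_comp τ (fun a => hN.eigenvalues a * t a)]
    apply Finset.sum_congr rfl
    intro a _
    rw [hτ]; rfl
  rw [hre]
  apply key_ineq hk1 hkn μ hanti s (fun a => ht0 _) (fun a => ht1 _)
  rw [hsdef]
  simp only
  rw [Equiv.sum_comp τ t, htsum]

lemma sum_mulVec' {n l : ℕ} (N : Fin l → Matrix (Fin n) (Fin n) ℝ) (v : Fin n → ℝ) :
    (∑ i, N i) *ᵥ v = ∑ i, N i *ᵥ v := by
  ext a
  simp [Matrix.mulVec, dotProduct, Matrix.sum_apply, Finset.sum_mul, Finset.sum_apply]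
  rw [Finset.sum_comm]

lemma dotProduct_sum' {n l : ℕ} (u : Fin n → ℝ) (v : Fin l → Fin n → ℝ) :
    u ⬝ᵥ (∑ i, v i) = ∑ i, u ⬝ᵥ v i := by
  simp [dotProduct, Finset.sum_apply, Finset.mul_sum]
  rw [Finset.sum_comm]

/-- If `G₁, …, G_l` (`l ≥ 1`) are edge-disjoint subgraphs of `G` whose edge sets
cover `E(G)`, then for `1/2 ≤ α < 1` and `1 ≤ k ≤ n`, the sum of the `k` largest
`A_α`-eigenvalues of `G` is at most the sum over `i` of the sums of the `k`
largest `A_α`-eigenvalues of the `Gᵢ`. -/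
theorem sum_top_Aalpha_eigenvalues_subadditive {n l : ℕ} (hl : 1 ≤ l)
    (G : SimpleGraph (Fin n)) [DecidableRel G.Adj]
    (Gs : Fin l → SimpleGraph (Fin n)) [inst : ∀ i, DecidableRel (Gs i).Adj]
    (hsub : ∀ i, Gs i ≤ G)
    (hdisj : ∀ i j, i ≠ j → Disjoint (Gs i).edgeSet (Gs j).edgeSet)
    (hcover : (⋃ i, (Gs i).edgeSet) = G.edgeSet)
    (α : ℝ) (hα0 : 1/2 ≤ α) (hα1 : α < 1)
    (hH : (α • Matrix.diagonal (fun v => (G.degree v : ℝ))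
        + (1 - α) • G.adjMatrix ℝ).IsHermitian)
    (hHs : ∀ i, (α • Matrix.diagonal (fun v => ((Gs i).degree v : ℝ))
        + (1 - α) • (Gs i).adjMatrix ℝ).IsHermitian)
    (ρ : Fin n → ℝ)
    (hρ : IsSortedEigs (α • Matrix.diagonal (fun v => (G.degree v : ℝ))
        + (1 - α) • G.adjMatrix ℝ) hH ρ)
    (μ : Fin l → Fin n → ℝ)
    (hμ : ∀ i, IsSortedEigs (α • Matrix.diagonal (fun v => ((Gs i).degree v : ℝ))
        + (1 - α) • (Gs i).adjMatrix ℝ) (hHs i) (μ i))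
    (k : ℕ) (hk1 : 1 ≤ k) (hkn : k ≤ n) :
    ∑ j : Fin n, (if (j : ℕ) < k then ρ j else 0)
      ≤ ∑ i : Fin l, ∑ j : Fin n, (if (j : ℕ) < k then μ i j else 0) := by
  -- adjacency matrix decomposition
  have hAdj : G.adjMatrix ℝ = ∑ i, (Gs i).adjMatrix ℝ := by
    ext v u
    rw [Matrix.sum_apply]
    simp only [SimpleGraph.adjMatrix_apply]
    by_cases hG : G.Adj v u
    · have hmem : s(v, u) ∈ ⋃ i, (Gs i).edgeSet := by
        rw [hcover]; exact hG
      obtain ⟨i₀, hi₀⟩ := Set.mem_iUnion.mp hmem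
      have hadj₀ : (Gs i₀).Adj v u := hi₀
      rw [if_pos hG, Finset.sum_eq_single i₀]
      · rw [if_pos hadj₀]
      · intro i _ hne
        rw [if_neg]
        intro hadj
        exact Set.disjoint_left.mp (hdisj i i₀ hne) hadj hi₀
      · simp
    · rw [if_neg hG]
      symm
      apply Finset.sum_eq_zero
      intro i _
      rw [if_neg]
      exact fun hadj => hG (hsub i hadj)
  -- degree decomposition
  have hDegG : ∀ v : Fin n, (G.degree v : ℝ) = ∑ u, G.adjMatrix ℝ v u := by
    intro v
    simp [SimpleGraph.degree, SimpleGraph.neighborFinset_eq_filter, Finset.sum_ite,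
      Finset.sum_const_zero]
  have hDegGs : ∀ (i : Fin l) (v : Fin n),
      ((Gs i).degree v : ℝ) = ∑ u, (Gs i).adjMatrix ℝ v u := by
    intro i v
    simp [SimpleGraph.degree, SimpleGraph.neighborFinset_eq_filter, Finset.sum_ite,
      Finset.sum_const_zero]
  have hDeg : ∀ v, (G.degree v : ℝ) = ∑ i, ((Gs i).degree v : ℝ) := by
    intro v
    rw [hDegG v]
    calc ∑ u, G.adjMatrix ℝ v u = ∑ u, ∑ i, (Gs i).adjMatrix ℝ v u := by
          apply Finset.sum_congr rfl
          intro u _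
          rw [hAdj, Matrix.sum_apply]
      _ = ∑ i, ∑ u, (Gs i).adjMatrix ℝ v u := Finset.sum_comm
      _ = ∑ i, ((Gs i).degree v : ℝ) :=
          Finset.sum_congr rfl fun i _ => (hDegGs i v).symm
  have hDiag : Matrix.diagonal (fun v => (G.degree v : ℝ))
      = ∑ i, Matrix.diagonal (fun v => ((Gs i).degree v : ℝ)) := by
    ext a b
    rw [Matrix.sum_apply]
    by_cases hab : a = b
    · subst hab
      simp only [Matrix.diagonal_apply_eq]
      exact hDeg a
    · simp [Matrix.diagonal_apply_ne _ hab]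
  have hM : (α • Matrix.diagonal (fun v => (G.degree v : ℝ)) + (1 - α) • G.adjMatrix ℝ)
      = ∑ i, (α • Matrix.diagonal (fun v => ((Gs i).degree v : ℝ))
        + (1 - α) • (Gs i).adjMatrix ℝ) := by
    rw [hDiag, hAdj, Finset.smul_sum, Finset.smul_sum, ← Finset.sum_add_distrib]
  -- orthonormal eigenvectors
  obtain ⟨hanti, σ, hσ⟩ := hρ
  set w : Fin n → (Fin n → ℝ) := fun j => ⇑(hH.eigenvectorBasis (σ j)) with hwdef
  have horth : ∀ j j', (w j) ⬝ᵥ (w j') = if j = j' then 1 else 0 := by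
    intro j j'
    have hON := hH.eigenvectorBasis.orthonormal
    rw [orthonormal_iff_ite] at hON
    have h := hON (σ j) (σ j')
    simp only [PiLp.inner_apply, RCLike.inner_apply, starRingEnd_apply, star_trivial,
      EmbeddingLike.apply_eq_iff_eq] at h
    simpa [hwdef, dotProduct, mul_comm] using h
  have hρq : ∀ j, ρ j = w j ⬝ᵥ ((α • Matrix.diagonal (fun v => (G.degree v : ℝ))
      + (1 - α) • G.adjMatrix ℝ) *ᵥ w j) := by
    intro j
    have hmv := hH.mulVec_eigenvectorBasis (σ j)
    rw [hwdef]
    simp only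
    rw [hmv, dotProduct_smul, smul_eq_mul]
    have h1 : (w j) ⬝ᵥ (w j) = 1 := by rw [horth j j, if_pos rfl]
    rw [hwdef] at h1
    simp only at h1
    rw [h1, mul_one, hσ]
    rfl
  have hsplit : ∀ j, w j ⬝ᵥ ((α • Matrix.diagonal (fun v => (G.degree v : ℝ))
      + (1 - α) • G.adjMatrix ℝ) *ᵥ w j)
      = ∑ i, w j ⬝ᵥ ((α • Matrix.diagonal (fun v => ((Gs i).degree v : ℝ))
        + (1 - α) • (Gs i).adjMatrix ℝ) *ᵥ w j) := by
    intro j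
    rw [hM, sum_mulVec', dotProduct_sum']
  calc ∑ j : Fin n, (if (j : ℕ) < k then ρ j else 0)
      = ∑ j : Fin n, ∑ i : Fin l, (if (j : ℕ) < k then
          w j ⬝ᵥ ((α • Matrix.diagonal (fun v => ((Gs i).degree v : ℝ))
            + (1 - α) • (Gs i).adjMatrix ℝ) *ᵥ w j) else 0) := by
        apply Finset.sum_congr rfl
        intro j _
        by_cases h : (j : ℕ) < k
        · simp only [h, if_pos]
          rw [hρq j, hsplit j]
        · simp [h]
    _ = ∑ i : Fin l, ∑ j : Fin n, (if (j : ℕ) < k then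
          w j ⬝ᵥ ((α • Matrix.diagonal (fun v => ((Gs i).degree v : ℝ))
            + (1 - α) • (Gs i).adjMatrix ℝ) *ᵥ w j) else 0) := Finset.sum_comm
    _ ≤ ∑ i : Fin l, ∑ j : Fin n, (if (j : ℕ) < k then μ i j else 0) := by
        apply Finset.sum_le_sum
        intro i _
        exact kyFan_bound _ (hHs i) (μ i) (hμ i) w horth k hk1 hkn
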